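/- Every simple graph on n vertices that is not k-connected has at most C(n-2,2) + 2k - 1 edges, where C(m,2) = m(m-1)/2, provided every vertex has degree at least k and n ≥ k+3. -/

import Mathlib

def KConnected {V : Type*} [Fintype V] (G : SimpleGraph V) (k : ℕ) : Prop :=
  k < Fintype.card V ∧
    ∀ s : Finset V, s.card < k → (G.induce ((s : Set V)ᶜ)).Connected

open Finset


private lemma keyZ (A B t k n : ℤ) (hA : k + 1 ≤ A) (hB : k + 1 ≤ B)
    (ht : t + 1 ≤ k) (ht0 : 0 ≤ t) (hAB : A + B = n + t) (hn : k + 3 ≤ n) :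
    A * (A - 1) + B * (B - 1) ≤ (n - 2) * (n - 3) + (4 * k - 2) + t * (t - 1) := by
  nlinarith [mul_nonneg (by linarith : (0:ℤ) ≤ A - (k+1)) (by linarith : (0:ℤ) ≤ B - (k+1)),
    mul_nonneg (by linarith : (0:ℤ) ≤ k - 1 - t) (by linarith : (0:ℤ) ≤ n - k - 1)]

private lemma two_mul_choose_two (m : ℕ) : 2 * m.choose 2 = m * (m - 1) := by
  rcases m with _ | p
  · simp
  · have hdvd : 2 ∣ (p + 1) * p := by
      rw [Nat.mul_comm]; exact (Nat.even_mul_succ_self p).two_dvd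
    rw [Nat.choose_two_right, Nat.succ_sub_one, Nat.mul_div_cancel' hdvd]

private lemma arith (a b t k n : ℕ) (h1 : k + 1 ≤ a + t) (h2 : k + 1 ≤ b + t)
    (ht : t < k) (hsum : a + b + t = n) (hkn : k + 3 ≤ n) :
    (a + t).choose 2 + ((b + t).choose 2 - t.choose 2) ≤ (n - 2) * (n - 3) / 2 + 2 * k - 1 := by
  have hrhs : (n - 2) * (n - 3) / 2 = (n - 2).choose 2 := by
    have h3 : n - 2 - 1 = n - 3 := by omega
    rw [Nat.choose_two_right, h3]
  have hsum' : (a : ℤ) + b + t = n := by exact_mod_cast hsum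
  have key : (a + t) * (a + t - 1) + (b + t) * (b + t - 1) ≤
      (n - 2) * (n - 3) + (4 * k - 2) + t * (t - 1) := by
    have hz := keyZ ((a : ℤ) + t) ((b : ℤ) + t) t k n (by exact_mod_cast h1)
      (by exact_mod_cast h2) (by exact_mod_cast ht) (by positivity)
      (by linarith) (by exact_mod_cast hkn)
    rcases Nat.eq_zero_or_pos t with ht0 | ht0
    · subst ht0
      norm_num at hz ⊢
      zify [show 1 ≤ a by omega, show 1 ≤ b by omega, show 2 ≤ n by omega,
        show 3 ≤ n by omega, show 2 ≤ 4 * k by omega]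
      linarith
    · zify [show 1 ≤ a + t by omega, show 1 ≤ b + t by omega, show 2 ≤ n by omega,
        show 3 ≤ n by omega, show 2 ≤ 4 * k by omega, ht0]
      linarith
  have e1 := two_mul_choose_two (a + t)
  have e2 := two_mul_choose_two (b + t)
  have e3 := two_mul_choose_two t
  have e4 := two_mul_choose_two (n - 2)
  have hn3 : n - 2 - 1 = n - 3 := by omega
  rw [hn3] at e4
  rw [← e1, ← e2, ← e3, ← e4] at key
  have hmono : t.choose 2 ≤ (b + t).choose 2 := Nat.choose_le_choose 2 (by omega)
  rw [hrhs]
  omega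

theorem stmt12 {V : Type*} [Fintype V] (n k : ℕ) (hcard : Fintype.card V = n)
    (hn : k + 3 ≤ n) (G : SimpleGraph V) (hmin : ∀ v, k ≤ (G.neighborSet v).ncard)
    (hnotk : ¬ KConnected G k) :
    G.edgeSet.ncard ≤ (n - 2) * (n - 3) / 2 + 2 * k - 1 := by
  classical
  rw [KConnected] at hnotk
  have hklt : k < Fintype.card V := by omega
  have hex : ∃ s : Finset V, s.card < k ∧ ¬ (G.induce ((s : Set V)ᶜ)).Connected := by
    by_contra h
    push_neg at h
    exact hnotk ⟨hklt, h⟩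
  obtain ⟨s, hsc, hsnc⟩ := hex
  set C : Set V := ((s : Set V))ᶜ with hC
  have hCne : Nonempty C := by
    have : sᶜ.Nonempty := by
      rw [← Finset.card_pos, Finset.card_compl]
      omega
    obtain ⟨v, hv⟩ := this
    exact ⟨⟨v, by simpa [hC] using hv⟩⟩
  have hpre : ¬ (G.induce C).Preconnected := by
    intro h
    exact hsnc ((SimpleGraph.connected_iff _).2 ⟨h, hCne⟩)
  rw [SimpleGraph.Preconnected] at hpre
  push_neg at hpre
  obtain ⟨x, y, hxy⟩ := hpre
  set A : Set V := {v | ∃ h : v ∈ C, (G.induce C).Reachable ⟨v, h⟩ x} with hA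
  set B : Set V := C \ A with hB
  have hAC : A ⊆ C := fun v hv => hv.1
  have hxA : (x : V) ∈ A := ⟨x.2, by rw [Subtype.coe_eta]⟩
  have hyB : (y : V) ∈ B := by
    refine ⟨y.2, fun hy => ?_⟩
    obtain ⟨h, hr⟩ := hy
    rw [Subtype.coe_eta] at hr
    exact hxy hr.symm
  -- no edges between A and B
  have hnoadj : ∀ u v, u ∈ A → v ∈ B → ¬ G.Adj u v := by
    rintro u v ⟨hu, hru⟩ ⟨hv, hnv⟩ hadj
    refine hnv ⟨hv, ?_⟩
    have hadj' : (G.induce C).Adj ⟨v, hv⟩ ⟨u, hu⟩ := by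
      simp [hadj.symm]
    exact hadj'.reachable.trans hru
  -- min degree consequences
  have hdegA : ∀ u ∈ A, G.neighborSet u ⊆ (A \ {u}) ∪ (s : Set V) := by
    intro u hu w hw
    have hadj : G.Adj u w := hw
    by_cases hws : w ∈ (s : Set V)
    · exact Or.inr hws
    · have hwC : w ∈ C := hws
      by_cases hwA : w ∈ A
      · exact Or.inl ⟨hwA, fun h => G.ne_of_adj hadj (by simpa using h.symm)⟩
      · exact absurd hadj (hnoadj u w hu ⟨hwC, hwA⟩)
  have hdegB : ∀ u ∈ B, G.neighborSet u ⊆ (B \ {u}) ∪ (s : Set V) := by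
    intro u hu w hw
    have hadj : G.Adj u w := hw
    by_cases hws : w ∈ (s : Set V)
    · exact Or.inr hws
    · have hwC : w ∈ C := hws
      by_cases hwA : w ∈ A
      · exact absurd hadj.symm (hnoadj w u hwA hu)
      · exact Or.inl ⟨⟨hwC, hwA⟩, fun h => G.ne_of_adj hadj (by simpa using h.symm)⟩
  have hAc : 1 ≤ A.ncard := (Set.ncard_pos (Set.toFinite _)).2 ⟨_, hxA⟩
  have hBc : 1 ≤ B.ncard := (Set.ncard_pos (Set.toFinite _)).2 ⟨_, hyB⟩
  have hcardA : k + 1 ≤ A.ncard + s.card := by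
    have h1 : k ≤ ((A \ {(x : V)}) ∪ (s : Set V)).ncard :=
      le_trans (hmin x) (Set.ncard_le_ncard (hdegA _ hxA) (Set.toFinite _))
    have h2 : ((A \ {(x : V)}) ∪ (s : Set V)).ncard ≤ (A \ {(x : V)}).ncard + s.card := by
      simpa using Set.ncard_union_le (A \ {(x : V)}) (s : Set V)
    have h3 : (A \ {(x : V)}).ncard + 1 = A.ncard := Set.ncard_diff_singleton_add_one hxA
    omega
  have hcardB : k + 1 ≤ B.ncard + s.card := by
    have h1 : k ≤ ((B \ {(y : V)}) ∪ (s : Set V)).ncard :=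
      le_trans (hmin y) (Set.ncard_le_ncard (hdegB _ hyB) (Set.toFinite _))
    have h2 : ((B \ {(y : V)}) ∪ (s : Set V)).ncard ≤ (B \ {(y : V)}).ncard + s.card := by
      simpa using Set.ncard_union_le (B \ {(y : V)}) (s : Set V)
    have h3 : (B \ {(y : V)}).ncard + 1 = B.ncard := Set.ncard_diff_singleton_add_one hyB
    omega
  -- partition
  have hdisjAB : Disjoint A B := Set.disjoint_sdiff_right
  have hdisjS : Disjoint (A ∪ B) (s : Set V) := by
    have : A ∪ B ⊆ C := Set.union_subset hAC Set.diff_subset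
    exact Set.disjoint_of_subset_left this disjoint_compl_left
  have hunion : A ∪ B ∪ (s : Set V) = Set.univ := by
    rw [Set.eq_univ_iff_forall]
    intro v
    by_cases hvs : v ∈ (s : Set V)
    · exact Or.inr hvs
    · by_cases hvA : v ∈ A
      · exact Or.inl (Or.inl hvA)
      · exact Or.inl (Or.inr ⟨hvs, hvA⟩)
  have hsum : A.ncard + B.ncard + s.card = n := by
    have h1 : (A ∪ B ∪ (s : Set V)).ncard = n := by
      rw [hunion, Set.ncard_univ, Nat.card_eq_fintype_card, hcard]
    rw [Set.ncard_union_eq hdisjS (Set.toFinite _) (Set.toFinite _),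
      Set.ncard_union_eq hdisjAB (Set.toFinite _) (Set.toFinite _),
      Set.ncard_coe_finset] at h1
    exact h1
  -- edge counting
  set pf : Sym2 V → Finset V :=
    Sym2.lift ⟨fun u v => {u, v}, fun u v => Finset.pair_comm u v⟩ with hpf
  have hpfmk : ∀ u v : V, pf s(u, v) = {u, v} := fun u v => rfl
  have hinj : Set.InjOn pf G.edgeSet := by
    intro e1 he1 e2 he2 heq
    induction e1 using Sym2.ind with | _ u v =>
    induction e2 using Sym2.ind with | _ p q =>
    rw [SimpleGraph.mem_edgeSet] at he1 he2
    rw [hpfmk, hpfmk] at heq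
    have hu : u = p ∨ u = q := by
      have : u ∈ ({p, q} : Finset V) := heq ▸ Finset.mem_insert_self u {v}
      simpa using this
    have hv : v = p ∨ v = q := by
      have : v ∈ ({p, q} : Finset V) := heq ▸ Finset.mem_insert_of_mem (Finset.mem_singleton_self v)
      simpa using this
    have hne : u ≠ v := he1.ne
    rcases hu with rfl | rfl <;> rcases hv with rfl | rfl
    · exact absurd rfl hne
    · rfl
    · exact Sym2.eq_swap
    · exact absurd rfl hne
  set af := A.toFinset with haf
  set bf := B.toFinset with hbf
  set P1 := Finset.powersetCard 2 (af ∪ s) with hP1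
  set P2 := Finset.powersetCard 2 (bf ∪ s) \ Finset.powersetCard 2 s with hP2
  have himg : pf '' G.edgeSet ⊆ ↑(P1 ∪ P2) := by
    rintro p ⟨e, he, rfl⟩
    induction e using Sym2.ind with | _ u v =>
    rw [SimpleGraph.mem_edgeSet] at he
    rw [hpfmk]
    have hcard2 : ({u, v} : Finset V).card = 2 := Finset.card_pair he.ne
    simp only [hP1, hP2, Finset.coe_union, Set.mem_union, Finset.mem_coe, Finset.mem_union,
      Finset.mem_sdiff, Finset.mem_powersetCard]
    by_cases hu : u ∈ A ∪ (s : Set V)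
    · by_cases hv : v ∈ A ∪ (s : Set V)
      · left
        refine ⟨?_, hcard2⟩
        intro w hw
        simp only [Finset.mem_insert, Finset.mem_singleton] at hw
        rcases hw with rfl | rfl
        · rcases hu with h | h
          · exact Finset.mem_union_left _ (by simpa [haf] using h)
          · exact Finset.mem_union_right _ (by simpa using h)
        · rcases hv with h | h
          · exact Finset.mem_union_left _ (by simpa [haf] using h)
          · exact Finset.mem_union_right _ (by simpa using h)
      · -- v ∈ B
        have hvB : v ∈ B := by
          rcases (hunion ▸ Set.mem_univ v : v ∈ A ∪ B ∪ (s : Set V)) with (h | h) | h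
          · exact absurd (Or.inl h) hv
          · exact h
          · exact absurd (Or.inr h) hv
        have huB : u ∉ A := fun h => hnoadj u v h hvB he
        have huBs : u ∈ B ∨ u ∈ (s : Set V) := by
          rcases (hunion ▸ Set.mem_univ u : u ∈ A ∪ B ∪ (s : Set V)) with (h | h) | h
          · exact absurd h huB
          · exact Or.inl h
          · exact Or.inr h
        right
        refine ⟨⟨?_, hcard2⟩, ?_⟩
        · intro w hw
          simp only [Finset.mem_insert, Finset.mem_singleton] at hw
          rcases hw with rfl | rfl
          · rcases huBs with h | h
            · exact Finset.mem_union_left _ (by simpa [hbf] using h)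
            · exact Finset.mem_union_right _ (by simpa using h)
          · exact Finset.mem_union_left _ (by simpa [hbf] using hvB)
        · rintro ⟨hsub, -⟩
          have : v ∈ (s : Set V) := by
            have := hsub (Finset.mem_insert_of_mem (Finset.mem_singleton_self v))
            simpa using this
          exact hvB.1 this
    · -- u ∈ B
      have huB : u ∈ B := by
        rcases (hunion ▸ Set.mem_univ u : u ∈ A ∪ B ∪ (s : Set V)) with (h | h) | h
        · exact absurd (Or.inl h) hu
        · exact h
        · exact absurd (Or.inr h) hu
      have hvA : v ∉ A := fun h => hnoadj v u h huB he.symm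
      have hvBs : v ∈ B ∨ v ∈ (s : Set V) := by
        rcases (hunion ▸ Set.mem_univ v : v ∈ A ∪ B ∪ (s : Set V)) with (h | h) | h
        · exact absurd h hvA
        · exact Or.inl h
        · exact Or.inr h
      right
      refine ⟨⟨?_, hcard2⟩, ?_⟩
      · intro w hw
        simp only [Finset.mem_insert, Finset.mem_singleton] at hw
        rcases hw with rfl | rfl
        · exact Finset.mem_union_left _ (by simpa [hbf] using huB)
        · rcases hvBs with h | h
          · exact Finset.mem_union_left _ (by simpa [hbf] using h)
          · exact Finset.mem_union_right _ (by simpa using h)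
      · rintro ⟨hsub, -⟩
        have : u ∈ (s : Set V) := by
          have := hsub (Finset.mem_insert_self u {v})
          simpa using this
        exact huB.1 this
  have hE1 : G.edgeSet.ncard = (pf '' G.edgeSet).ncard := (Set.ncard_image_of_injOn hinj).symm
  have hE2 : (pf '' G.edgeSet).ncard ≤ (P1 ∪ P2).card := by
    have := Set.ncard_le_ncard himg (Finset.finite_toSet _)
    rwa [Set.ncard_coe_finset] at this
  have hP1card : P1.card ≤ (A.ncard + s.card).choose 2 := by
    rw [hP1, Finset.card_powersetCard]
    refine Nat.choose_le_choose 2 ?_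
    calc (af ∪ s).card ≤ af.card + s.card := Finset.card_union_le _ _
      _ = A.ncard + s.card := by rw [haf, Set.ncard_eq_toFinset_card']
  have hP2card : P2.card ≤ (B.ncard + s.card).choose 2 - s.card.choose 2 := by
    rw [hP2, Finset.card_sdiff_of_subset (Finset.powersetCard_mono Finset.subset_union_right),
      Finset.card_powersetCard, Finset.card_powersetCard]
    refine Nat.sub_le_sub_right (Nat.choose_le_choose 2 ?_) _
    calc (bf ∪ s).card ≤ bf.card + s.card := Finset.card_union_le _ _
      _ = B.ncard + s.card := by rw [hbf, Set.ncard_eq_toFinset_card']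
  have harith : (A.ncard + s.card).choose 2 + ((B.ncard + s.card).choose 2 - s.card.choose 2)
      ≤ (n - 2) * (n - 3) / 2 + 2 * k - 1 :=
    arith _ _ _ _ _ hcardA hcardB hsc hsum hn
  calc G.edgeSet.ncard = (pf '' G.edgeSet).ncard := hE1
    _ ≤ (P1 ∪ P2).card := hE2
    _ ≤ P1.card + P2.card := Finset.card_union_le _ _
    _ ≤ (A.ncard + s.card).choose 2 + ((B.ncard + s.card).choose 2 - s.card.choose 2) :=
        Nat.add_le_add hP1card hP2card
    _ ≤ (n - 2) * (n - 3) / 2 + 2 * k - 1 := harith
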